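/- Let X_1,...,X_n be independent random variables taking values in a space Ω, and let f : Ω^n → ℝ satisfy the bounded differences property with constants L_1,...,L_n: for each k, changing only the k-th coordinate changes f by at most L_k. Then for every t ≥ 0, P[f(X_1,...,X_n) − E f(X_1,...,X_n) ≥ t] ≤ exp(−2t² / Σ_{i=1}^n L_i²). -/

import Mathlib

open MeasureTheory Real

lemma aux_calc {p : ℝ} (hp0 : 0 ≤ p) (hp1 : p ≤ 1) {h : ℝ} (hh : 0 ≤ h) :
    1 - p + p * Real.exp h ≤ Real.exp (p * h + h ^ 2 / 8) := by
  set d : ℝ → ℝ := fun x => 1 - p + p * Real.exp x with hd_def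
  have hd : ∀ x, 0 < d x := by
    intro x
    rcases lt_or_eq_of_le hp1 with h1 | h1
    · have : 0 ≤ p * Real.exp x := mul_nonneg hp0 (Real.exp_pos x).le
      simp only [hd_def]; linarith
    · simp only [hd_def, h1]; have := Real.exp_pos x; linarith
  have hdd : ∀ x, HasDerivAt d (p * Real.exp x) x := fun x =>
    ((Real.hasDerivAt_exp x).const_mul p).const_add (1 - p)
  set ψ' : ℝ → ℝ := fun x => p + x / 4 - p * Real.exp x / d x with hψ'_def
  set ψ : ℝ → ℝ := fun x => p * x + x ^ 2 / 8 - Real.log (d x) with hψ_def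
  have hdψ : ∀ x, HasDerivAt ψ (ψ' x) x := by
    intro x
    have h2 : HasDerivAt (fun x : ℝ => p * x) p x := by
      simpa using (hasDerivAt_id x).const_mul p
    have h3 : HasDerivAt (fun x : ℝ => x ^ 2 / 8) (x / 4) x := by
      have := (hasDerivAt_pow 2 x).div_const 8
      exact this.congr_deriv (by norm_num; ring)
    have h4 : HasDerivAt (fun x => Real.log (d x)) (p * Real.exp x / d x) x :=
      (hdd x).log (hd x).ne'
    exact (h2.add h3).sub h4
  set ψ'' : ℝ → ℝ := fun x =>
    1 / 4 - (p * Real.exp x * d x - p * Real.exp x * (p * Real.exp x)) / (d x) ^ 2 with hψ''_def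
  have hdψ' : ∀ x, HasDerivAt ψ' (ψ'' x) x := by
    intro x
    have h1 : HasDerivAt (fun x : ℝ => p + x / 4) (1 / 4) x := by
      simpa using ((hasDerivAt_id x).div_const 4).const_add p
    have h2 : HasDerivAt (fun x => p * Real.exp x / d x)
        ((p * Real.exp x * d x - p * Real.exp x * (p * Real.exp x)) / (d x) ^ 2) x :=
      ((Real.hasDerivAt_exp x).const_mul p).div (hdd x) (hd x).ne'
    exact h1.sub h2
  have hψ''_nonneg : ∀ x, 0 ≤ ψ'' x := by
    intro x
    have hdx := hd x
    have e := Real.exp_pos x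
    have hq : (p * Real.exp x * d x - p * Real.exp x * (p * Real.exp x)) / (d x) ^ 2 ≤ 1 / 4 := by
      rw [div_le_iff₀ (by positivity)]
      have hdxe : d x = 1 - p + p * Real.exp x := rfl
      nlinarith [sq_nonneg ((1 - p) - p * Real.exp x)]
    simp only [hψ''_def]; linarith
  have hψ'0 : ψ' 0 = 0 := by simp [hψ'_def, hd_def]
  have hψ'_mono : Monotone ψ' := monotone_of_deriv_nonneg (fun x => (hdψ' x).differentiableAt)
      (fun x => by rw [(hdψ' x).deriv]; exact hψ''_nonneg x)
  have hψ'_nonneg : ∀ x : ℝ, 0 ≤ x → 0 ≤ ψ' x := fun x hx => hψ'0 ▸ hψ'_mono hx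
  have hψ_mono : MonotoneOn ψ (Set.Ici 0) := monotoneOn_of_deriv_nonneg (convex_Ici 0)
      (fun x _ => (hdψ x).differentiableAt.continuousAt.continuousWithinAt)
      (fun x _ => (hdψ x).differentiableAt.differentiableWithinAt)
      (fun x hx => by
        rw [(hdψ x).deriv]
        exact hψ'_nonneg x (le_of_lt (by simpa using hx)))
  have hψ0 : ψ 0 = 0 := by simp [hψ_def, hd_def]
  have h0 := hψ_mono Set.self_mem_Ici (Set.mem_Ici.2 hh) hh
  rw [hψ0] at h0
  have hlog : Real.log (d h) ≤ p * h + h ^ 2 / 8 := by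
    simp only [hψ_def] at h0; linarith
  exact (Real.log_le_iff_le_exp (hd h)).1 hlog

lemma aux_hoeffding {Ω : Type*} [MeasurableSpace Ω] (ν : Measure Ω) [IsProbabilityMeasure ν]
    (g : Ω → ℝ) (hg : Measurable g) (a L : ℝ) (hL : 0 ≤ L)
    (hab : ∀ x, g x ∈ Set.Icc a (a + L)) {c : ℝ} (hc : 0 ≤ c) :
    ∫ x, Real.exp (c * g x) ∂ν ≤ Real.exp (c * ∫ x, g x ∂ν + c ^ 2 * L ^ 2 / 8) := by
  rcases eq_or_lt_of_le hL with hL0 | hLpos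
  · have hga : ∀ x, g x = a := by
      intro x
      have h1 := (hab x).1; have h2 := (hab x).2
      rw [← hL0] at h2; simp at h2; linarith
    simp only [hga]
    rw [integral_const]
    simp [← hL0]
  · set b := a + L with hb
    set m := ∫ x, g x ∂ν with hm
    have hg_int : Integrable g ν := by
      refine (integrable_const (‖a‖ + ‖b‖)).mono' hg.aestronglyMeasurable
        (Filter.Eventually.of_forall fun x => ?_)
      have h1 := (hab x).1; have h2 := (hab x).2
      simp only [Real.norm_eq_abs]
      rw [abs_le]
      constructor
      · nlinarith [neg_abs_le a, abs_nonneg b]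
      · nlinarith [le_abs_self b, abs_nonneg a]
    have ham : a ≤ m := by
      have := integral_mono (integrable_const a) hg_int (fun x => (hab x).1)
      simpa using this
    have hmb : m ≤ b := by
      have := integral_mono hg_int (integrable_const b) (fun x => (hab x).2)
      simpa using this
    have hconv : ∀ x, Real.exp (c * g x) ≤
        ((b - g x) * Real.exp (c * a) + (g x - a) * Real.exp (c * b)) / L := by
      intro x
      have h1 := (hab x).1; have h2 := (hab x).2
      have hθ : 0 ≤ (b - g x) / L := div_nonneg (by linarith) hLpos.le
      have hθ' : 0 ≤ (g x - a) / L := div_nonneg (by linarith) hLpos.le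
      have hsum : (b - g x) / L + (g x - a) / L = 1 := by
        field_simp; rw [hb]; ring
      have hcx := convexOn_exp.2 (Set.mem_univ (c * a)) (Set.mem_univ (c * b)) hθ hθ' hsum
      simp only [smul_eq_mul] at hcx
      have hx : (b - g x) / L * (c * a) + (g x - a) / L * (c * b) = c * g x := by
        field_simp; ring
      rw [hx] at hcx
      refine hcx.trans (le_of_eq ?_)
      field_simp
    have hexp_meas : Measurable fun x => Real.exp (c * g x) :=
      Real.measurable_exp.comp (hg.const_mul c)
    have hexp_int : Integrable (fun x => Real.exp (c * g x)) ν := by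
      refine (integrable_const (Real.exp (c * b))).mono' hexp_meas.aestronglyMeasurable
        (Filter.Eventually.of_forall fun x => ?_)
      rw [Real.norm_eq_abs, abs_of_pos (Real.exp_pos _)]
      exact Real.exp_le_exp.2 (mul_le_mul_of_nonneg_left (hab x).2 hc)
    have hrhs_int : Integrable (fun x =>
        ((b - g x) * Real.exp (c * a) + (g x - a) * Real.exp (c * b)) / L) ν :=
      ((((integrable_const b).sub hg_int).mul_const _).add
        ((hg_int.sub (integrable_const a)).mul_const _)).div_const L
    have hint := integral_mono hexp_int hrhs_int hconv
    have hIRHS : (∫ x, ((b - g x) * Real.exp (c * a) + (g x - a) * Real.exp (c * b)) / L ∂ν)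
        = ((b - m) * Real.exp (c * a) + (m - a) * Real.exp (c * b)) / L := by
      have h1 : ∀ x : Ω, ((b - g x) * Real.exp (c * a) + (g x - a) * Real.exp (c * b)) / L
          = (b * Real.exp (c * a) - a * Real.exp (c * b)) / L
            + ((Real.exp (c * b) - Real.exp (c * a)) / L) * g x := by
        intro x; field_simp; ring
      simp_rw [h1]
      rw [integral_add (integrable_const _) (hg_int.const_mul _), integral_const,
        MeasureTheory.integral_const_mul]
      simp only [measure_univ, probReal_univ, ENNReal.toReal_one, one_smul, ← hm]
      field_simp
      ring
    rw [hIRHS] at hint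
    have hp0 : 0 ≤ (m - a) / L := div_nonneg (by linarith) hLpos.le
    have hp1 : (m - a) / L ≤ 1 := by rw [div_le_one hLpos]; rw [hb] at hmb; linarith
    have hcL : (0:ℝ) ≤ c * L := mul_nonneg hc hLpos.le
    have hkey := aux_calc hp0 hp1 hcL
    have hsplit : ((b - m) * Real.exp (c * a) + (m - a) * Real.exp (c * b)) / L
        = Real.exp (c * a) * (1 - (m - a) / L + (m - a) / L * Real.exp (c * L)) := by
      have hexp : Real.exp (c * b) = Real.exp (c * a) * Real.exp (c * L) := by
        rw [← Real.exp_add]; congr 1; rw [hb]; ring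
      rw [hexp, hb]; field_simp; ring
    calc (∫ x, Real.exp (c * g x) ∂ν)
        ≤ ((b - m) * Real.exp (c * a) + (m - a) * Real.exp (c * b)) / L := hint
      _ = Real.exp (c * a) * (1 - (m - a) / L + (m - a) / L * Real.exp (c * L)) := hsplit
      _ ≤ Real.exp (c * a) * Real.exp ((m - a) / L * (c * L) + (c * L) ^ 2 / 8) :=
          mul_le_mul_of_nonneg_left hkey (Real.exp_pos _).le
      _ = Real.exp (c * m + c ^ 2 * L ^ 2 / 8) := by
          rw [← Real.exp_add]; congr 1; field_simp; ring

lemma aux_int {α : Type*} [MeasurableSpace α] (μ : Measure α) [IsFiniteMeasure μ]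
    {h : α → ℝ} (hm : AEStronglyMeasurable h μ) {C : ℝ} (hC : ∀ x, |h x| ≤ C) :
    Integrable h μ :=
  (integrable_const C).mono' hm (Filter.Eventually.of_forall (by
    simpa [Real.norm_eq_abs] using hC))

lemma aux_diff_le {Ω : Type*} {n : ℕ} (f : (Fin n → Ω) → ℝ) (L : Fin n → ℝ)
    (hbd : ∀ (k : Fin n) (x : Fin n → Ω) (x' : Ω), |f x - f (Function.update x k x')| ≤ L k)
    (x y : Fin n → Ω) : |f x - f y| ≤ ∑ i, L i := by
  classical
  have key : ∀ s : Finset (Fin n),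
      |f x - f (fun i => if i ∈ s then y i else x i)| ≤ ∑ i ∈ s, L i := by
    intro s
    induction s using Finset.induction_on with
    | empty => simp
    | insert k s hk ih =>
      have hupd : (fun i => if i ∈ insert k s then y i else x i)
          = Function.update (fun i => if i ∈ s then y i else x i) k (y k) := by
        funext i
        rcases eq_or_ne i k with rfl | hik
        · simp [Function.update]
        · simp [Function.update, hik, hk, Finset.mem_insert, hik]
      rw [hupd, Finset.sum_insert hk]
      calc |f x - f (Function.update (fun i => if i ∈ s then y i else x i) k (y k))|
          ≤ |f x - f (fun i => if i ∈ s then y i else x i)|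
            + |f (fun i => if i ∈ s then y i else x i)
              - f (Function.update (fun i => if i ∈ s then y i else x i) k (y k))| := by
            have := abs_sub_abs_le_abs_sub (f x) (f (fun i => if i ∈ s then y i else x i))
            exact abs_sub_le _ _ _
        _ ≤ (∑ i ∈ s, L i) + L k := add_le_add ih (hbd k _ _)
        _ = L k + ∑ i ∈ s, L i := by ring
  have := key Finset.univ
  simpa using this

lemma aux_tensor {Ω : Type*} [MeasurableSpace Ω] (n : ℕ) :
    ∀ (κ : Fin n → Measure Ω), (∀ i, IsProbabilityMeasure (κ i)) →
    ∀ (f : (Fin n → Ω) → ℝ), Measurable f →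
    ∀ L : Fin n → ℝ,
    (∀ (k : Fin n) (x : Fin n → Ω) (x' : Ω), |f x - f (Function.update x k x')| ≤ L k) →
    ∀ c : ℝ, 0 ≤ c →
    ∫ x, Real.exp (c * f x) ∂(Measure.pi κ) ≤
      Real.exp (c * ∫ x, f x ∂(Measure.pi κ) + c ^ 2 * (∑ i, (L i) ^ 2) / 8) := by
  induction n with
  | zero =>
    intro κ hκ f hf L hbd c hc
    have hpi : Measure.pi κ = Measure.dirac (fun i : Fin 0 => i.elim0) :=
      Measure.pi_of_empty κ _
    have hm2 : Measurable fun x : Fin 0 → Ω => Real.exp (c * f x) := (hf.const_mul c).exp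
    rw [hpi, integral_dirac' _ _ hf.stronglyMeasurable, integral_dirac' _ _ hm2.stronglyMeasurable]
    simp
  | succ n ih =>
    intro κ hκ f hf L hbd c hc
    haveI := hκ
    -- Ω is nonempty
    have hΩ : Nonempty Ω := by
      by_contra hemp
      rw [not_nonempty_iff] at hemp
      have h1 := (hκ 0).measure_univ
      have h2 : (Set.univ : Set Ω) = ∅ := Set.univ_eq_empty_iff.2 hemp
      rw [h2, measure_empty] at h1
      exact zero_ne_one h1
    -- L is nonneg
    have hLnn : ∀ k, 0 ≤ (L k : ℝ) := by
      intro k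
      have := hbd k (fun _ => Classical.arbitrary Ω) (Classical.arbitrary Ω)
      rw [Function.update_eq_self] at this
      simpa using this
    -- boundedness of f
    obtain ⟨C, hC⟩ : ∃ C, ∀ x, |f x| ≤ C := by
      refine ⟨|f (fun _ => Classical.arbitrary Ω)| + ∑ i, L i, fun x => ?_⟩
      have h1 := aux_diff_le f L hbd x (fun _ => Classical.arbitrary Ω)
      calc |f x| ≤ |f x - f (fun _ => Classical.arbitrary Ω)|
            + |f (fun _ => Classical.arbitrary Ω)| := by
            have := abs_sub_abs_le_abs_sub (f x) (f (fun _ => Classical.arbitrary Ω))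
            nlinarith [abs_nonneg (f x - f (fun _ => Classical.arbitrary Ω))]
        _ ≤ _ := by linarith
    set κ0 := κ 0 with hκ0
    haveI : ∀ j : Fin n, IsProbabilityMeasure (κ (Fin.succ j)) := fun j => hκ _
    set πs : Measure (Fin n → Ω) := Measure.pi (fun j => κ j.succ) with hπs
    haveI : IsProbabilityMeasure πs := by
      rw [hπs]; infer_instance
    have hMP : MeasurePreserving (MeasurableEquiv.piFinSuccAbove (fun _ => Ω) 0)
        (Measure.pi κ) (κ0.prod πs) := by
      have := measurePreserving_piFinSuccAbove κ 0
      simpa [Fin.succAbove_zero, hπs, hκ0] using this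
    have hconsx : ∀ x : Fin (n+1) → Ω,
        (Fin.cons (x 0) (fun j => x ((0 : Fin (n+1)).succAbove j)) : Fin (n+1) → Ω) = x := by
      intro x
      have h1 : (fun j => x ((0 : Fin (n+1)).succAbove j)) = Fin.tail x := by
        funext j; simp [Fin.succAbove_zero, Fin.tail]
      rw [h1, Fin.cons_self_tail]
    have key : ∀ g : (Fin (n+1) → Ω) → ℝ, ∫ x, g x ∂(Measure.pi κ)
        = ∫ p : Ω × (Fin n → Ω), g (Fin.cons p.1 p.2) ∂(κ0.prod πs) := by
      intro g
      rw [← hMP.integral_comp' (g := fun p : Ω × (Fin n → Ω) => g (Fin.cons p.1 p.2))]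
      congr 1
      funext x
      simp only [MeasurableEquiv.piFinSuccAbove_apply, Fin.insertNthEquiv_symm_apply,
        Fin.removeNth_zero, Fin.cons_self_tail]
    -- measurability of cons
    have mCons : Measurable fun p : Ω × (Fin n → Ω) => (Fin.cons p.1 p.2 : Fin (n+1) → Ω) := by
      apply measurable_pi_iff.2
      intro i
      refine Fin.cases ?_ ?_ i
      · simpa using measurable_fst
      · intro j
        simp only [Fin.cons_succ]; exact (measurable_pi_apply j).comp measurable_snd
    set F : Ω × (Fin n → Ω) → ℝ := fun p => f (Fin.cons p.1 p.2) with hF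
    have hFmeas : Measurable F := hf.comp mCons
    have hF_int : Integrable F (κ0.prod πs) := aux_int _ hFmeas.aestronglyMeasurable
      (fun p => hC _)
    have hexpF_int : Integrable (fun p => Real.exp (c * F p)) (κ0.prod πs) := by
      refine aux_int _ (Real.measurable_exp.comp (hFmeas.const_mul c)).aestronglyMeasurable
        (C := Real.exp (c * C)) (fun p => ?_)
      rw [abs_of_pos (Real.exp_pos _)]
      refine Real.exp_le_exp.2 (mul_le_mul_of_nonneg_left ?_ hc)
      exact (abs_le.1 (hC _)).2
    set G : Ω → ℝ := fun x => ∫ r, F (x, r) ∂πs with hG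
    have hGsm : StronglyMeasurable G := hFmeas.stronglyMeasurable.integral_prod_right'
    have hGmeas : Measurable G := hGsm.measurable
    have hGbd : ∀ x, |G x| ≤ C := by
      intro x
      rw [hG]
      have habs : |∫ r, F (x, r) ∂πs| ≤ ∫ r, |F (x, r)| ∂πs := by
        have := norm_integral_le_integral_norm (μ := πs) (fun r => F (x, r))
        simpa [Real.norm_eq_abs] using this
      calc |∫ r, F (x, r) ∂πs| ≤ ∫ r, |F (x, r)| ∂πs := habs
        _ ≤ ∫ _r, C ∂πs := by
            refine integral_mono (aux_int _ ((hFmeas.comp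
              measurable_prodMk_left).abs.aestronglyMeasurable)
              (fun r => by rw [abs_abs]; exact hC _))
              (integrable_const C) (fun r => hC _)
        _ = C := by simp
    -- inner bound by induction hypothesis
    have ihx : ∀ x : Ω, ∫ r, Real.exp (c * f (Fin.cons x r)) ∂πs
        ≤ Real.exp (c * G x + c ^ 2 * (∑ j : Fin n, (L j.succ) ^ 2) / 8) := by
      intro x
      refine ih (fun j => κ j.succ) (fun j => hκ _) (fun r => f (Fin.cons x r))
        (hf.comp (mCons.comp measurable_prodMk_left)) (fun j => L j.succ) ?_ c hc
      intro k r x'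
      show |f (Fin.cons x r) - f (Fin.cons x (Function.update r k x'))| ≤ L k.succ
      rw [Fin.cons_update]
      exact hbd k.succ _ _
    -- bounded-differences & range control for G
    have hGdiff : ∀ x x' : Ω, |G x - G x'| ≤ L 0 := by
      intro x x'
      have hint1 : Integrable (fun r => F (x, r)) πs :=
        aux_int _ ((hFmeas.comp measurable_prodMk_left).aestronglyMeasurable) (fun r => hC _)
      have hint2 : Integrable (fun r => F (x', r)) πs :=
        aux_int _ ((hFmeas.comp measurable_prodMk_left).aestronglyMeasurable) (fun r => hC _)
      rw [hG]
      simp only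
      rw [← integral_sub hint1 hint2]
      have habs : |∫ r, (F (x, r) - F (x', r)) ∂πs| ≤ ∫ r, |F (x, r) - F (x', r)| ∂πs := by
        have := norm_integral_le_integral_norm (μ := πs) (fun r => F (x, r) - F (x', r))
        simpa [Real.norm_eq_abs] using this
      calc |∫ r, (F (x, r) - F (x', r)) ∂πs| ≤ ∫ r, |F (x, r) - F (x', r)| ∂πs := habs
        _ ≤ ∫ _r, L 0 ∂πs := by
            refine integral_mono ((hint1.sub hint2).abs) (integrable_const _) (fun r => ?_)
            have : (Fin.cons x' r : Fin (n+1) → Ω)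
                = Function.update (Fin.cons x r) 0 x' := (Fin.update_cons_zero ..).symm
            simp only [hF, this]
            exact hbd 0 _ _
        _ = L 0 := by simp
    have hbddBelow : BddBelow (Set.range G) := by
      refine ⟨-C, fun y hy => ?_⟩
      obtain ⟨x, rfl⟩ := hy
      have := (abs_le.1 (hGbd x)).1
      linarith
    set a : ℝ := ⨅ x : Ω, G x with ha
    have hab : ∀ x, G x ∈ Set.Icc a (a + L 0) := by
      intro x
      constructor
      · exact ciInf_le hbddBelow x
      · have h1 : G x - L 0 ≤ a := by
          refine le_ciInf fun x' => ?_
          have := (abs_le.1 (hGdiff x x')).2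
          linarith
        linarith
    -- assemble
    have step1 : ∫ x, Real.exp (c * f x) ∂(Measure.pi κ)
        = ∫ x, ∫ r, Real.exp (c * f (Fin.cons x r)) ∂πs ∂κ0 := by
      rw [key (fun x => Real.exp (c * f x))]
      exact integral_prod _ hexpF_int
    have hInnerInt : Integrable (fun x => ∫ r, Real.exp (c * f (Fin.cons x r)) ∂πs) κ0 := by
      refine aux_int _ (Real.measurable_exp.comp
        (hFmeas.const_mul c)).stronglyMeasurable.integral_prod_right'.aestronglyMeasurable
        (C := Real.exp (c * C)) (fun x => ?_)
      rw [abs_of_nonneg (integral_nonneg fun r => (Real.exp_pos _).le)]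
      calc ∫ r, Real.exp (c * f (Fin.cons x r)) ∂πs ≤ ∫ _r, Real.exp (c * C) ∂πs := by
            refine integral_mono (aux_int _ (Real.measurable_exp.comp ((hf.comp
              (mCons.comp measurable_prodMk_left)).const_mul c)).aestronglyMeasurable
              (C := Real.exp (c * C)) (fun r => ?_)) (integrable_const _) (fun r => ?_)
            · rw [abs_of_pos (Real.exp_pos _)]
              exact Real.exp_le_exp.2 (mul_le_mul_of_nonneg_left (abs_le.1 (hC _)).2 hc)
            · exact Real.exp_le_exp.2 (mul_le_mul_of_nonneg_left (abs_le.1 (hC _)).2 hc)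
        _ = Real.exp (c * C) := by simp
    have hRHSInt : Integrable (fun x => Real.exp (c * G x
        + c ^ 2 * (∑ j : Fin n, (L j.succ) ^ 2) / 8)) κ0 := by
      refine aux_int _ (Real.measurable_exp.comp ((hGmeas.const_mul c).add_const
        _)).aestronglyMeasurable (C := Real.exp (c * C
          + c ^ 2 * (∑ j : Fin n, (L j.succ) ^ 2) / 8)) (fun x => ?_)
      rw [abs_of_pos (Real.exp_pos _)]
      refine Real.exp_le_exp.2 (add_le_add ?_ le_rfl)
      exact mul_le_mul_of_nonneg_left (abs_le.1 (hGbd x)).2 hc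
    have step2 : ∫ x, ∫ r, Real.exp (c * f (Fin.cons x r)) ∂πs ∂κ0
        ≤ ∫ x, Real.exp (c * G x + c ^ 2 * (∑ j : Fin n, (L j.succ) ^ 2) / 8) ∂κ0 :=
      integral_mono hInnerInt hRHSInt ihx
    have step3 : ∫ x, Real.exp (c * G x + c ^ 2 * (∑ j : Fin n, (L j.succ) ^ 2) / 8) ∂κ0
        = Real.exp (c ^ 2 * (∑ j : Fin n, (L j.succ) ^ 2) / 8) * ∫ x, Real.exp (c * G x) ∂κ0 := by
      simp_rw [Real.exp_add]
      rw [integral_mul_const]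
      ring
    have step4 : ∫ x, Real.exp (c * G x) ∂κ0
        ≤ Real.exp (c * (∫ x, G x ∂κ0) + c ^ 2 * (L 0) ^ 2 / 8) :=
      aux_hoeffding κ0 G hGmeas a (L 0) (hLnn 0) hab hc
    have step5 : ∫ x, G x ∂κ0 = ∫ x, f x ∂(Measure.pi κ) := by
      rw [key f]
      exact (integral_prod _ hF_int).symm
    calc ∫ x, Real.exp (c * f x) ∂(Measure.pi κ)
        ≤ Real.exp (c ^ 2 * (∑ j : Fin n, (L j.succ) ^ 2) / 8)
          * ∫ x, Real.exp (c * G x) ∂κ0 := by rw [step1, ← step3]; exact step2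
      _ ≤ Real.exp (c ^ 2 * (∑ j : Fin n, (L j.succ) ^ 2) / 8)
          * Real.exp (c * (∫ x, G x ∂κ0) + c ^ 2 * (L 0) ^ 2 / 8) :=
          mul_le_mul_of_nonneg_left step4 (Real.exp_pos _).le
      _ = Real.exp (c * ∫ x, f x ∂(Measure.pi κ)
          + c ^ 2 * (∑ i : Fin (n+1), (L i) ^ 2) / 8) := by
          rw [← Real.exp_add, step5, Fin.sum_univ_succ]
          congr 1
          ring

lemma aux_map_eq_pi {Ω : Type*} [MeasurableSpace Ω]
    {Ωp : Type*} [MeasurableSpace Ωp] (μ : Measure Ωp) [IsProbabilityMeasure μ]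
    (n : ℕ) (X : Fin n → Ωp → Ω) (hXmeas : ∀ i, Measurable (X i))
    (hindep : ProbabilityTheory.iIndepFun (m := fun _ : Fin n => ‹MeasurableSpace Ω›) X μ) :
    Measure.map (fun ω i => X i ω) μ = Measure.pi (fun i => μ.map (X i)) := by
  refine (Measure.pi_eq fun s hs => ?_).symm
  rw [Measure.map_apply (measurable_pi_iff.2 hXmeas) (MeasurableSet.univ_pi hs)]
  have hpre : (fun ω i => X i ω) ⁻¹' (Set.pi Set.univ s) = ⋂ i, X i ⁻¹' s i := by
    ext ω; simp [Set.mem_pi]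
  rw [hpre]
  have hmul := hindep.measure_inter_preimage_eq_mul Finset.univ (sets := s) (fun i _ => hs i)
  simp only [Finset.mem_univ, Set.iInter_true] at hmul
  rw [hmul]
  exact Finset.prod_congr rfl fun i _ => (Measure.map_apply (hXmeas i) (hs i)).symm

theorem mcdiarmid_bounded_differences {Ω : Type*} [MeasurableSpace Ω]
    {Ωp : Type*} [MeasurableSpace Ωp] (μ : Measure Ωp) [IsProbabilityMeasure μ]
    (n : ℕ) (X : Fin n → Ωp → Ω) (hXmeas : ∀ i, Measurable (X i))
    (hindep : ProbabilityTheory.iIndepFun (m := fun _ : Fin n => ‹MeasurableSpace Ω›) X μ)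
    (f : (Fin n → Ω) → ℝ) (hf : Measurable f)
    (L : Fin n → ℝ)
    (hbd : ∀ (k : Fin n) (x : Fin n → Ω) (x' : Ω),
      |f x - f (Function.update x k x')| ≤ L k)
    (t : ℝ) (ht : 0 ≤ t) :
    μ {ω | t ≤ f (fun i => X i ω) - ∫ ω', f (fun i => X i ω') ∂μ} ≤
      ENNReal.ofReal (Real.exp (-2 * t ^ 2 / ∑ i, (L i) ^ 2)) := by
  set S := ∑ i, (L i) ^ 2 with hS
  rcases eq_or_lt_of_le (show (0:ℝ) ≤ S from hS ▸ Finset.sum_nonneg fun i _ => sq_nonneg (L i))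
    with hS0 | hSpos
  · -- degenerate case : S = 0, bound is 1
    rw [← hS0]
    simp only [div_zero, Real.exp_zero, ENNReal.ofReal_one]
    exact prob_le_one
  · -- main case
    haveI : ∀ i, IsProbabilityMeasure (μ.map (X i)) :=
      fun i => Measure.isProbabilityMeasure_map (hXmeas i).aemeasurable
    set ν : Measure (Fin n → Ω) := Measure.pi (fun i => μ.map (X i)) with hν
    haveI : IsProbabilityMeasure ν := by rw [hν]; infer_instance
    have hT : Measurable (fun ω i => X i ω) := measurable_pi_iff.2 hXmeas
    have hmap : Measure.map (fun ω i => X i ω) μ = ν := aux_map_eq_pi μ n X hXmeas hindep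
    set m : ℝ := ∫ x, f x ∂ν with hm
    have hEq : ∫ ω', f (fun i => X i ω') ∂μ = m := by
      rw [hm, ← hmap, integral_map hT.aemeasurable hf.aestronglyMeasurable]
    -- nonempty
    have hΩp : Nonempty Ωp := by
      by_contra hemp
      rw [not_nonempty_iff] at hemp
      have h1 := (‹IsProbabilityMeasure μ›).measure_univ
      have h2 : (Set.univ : Set Ωp) = ∅ := Set.univ_eq_empty_iff.2 hemp
      rw [h2, measure_empty] at h1
      exact zero_ne_one h1
    have hn : 0 < n := by
      rcases Nat.eq_zero_or_pos n with h | h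
      · exfalso
        haveI : IsEmpty (Fin n) := ⟨fun i => Nat.not_lt_zero i.1 (h ▸ i.2)⟩
        rw [hS, Finset.univ_eq_empty, Finset.sum_empty] at hSpos
        exact lt_irrefl 0 hSpos
      · exact h
    have hΩ : Nonempty Ω := ⟨X ⟨0, hn⟩ (Classical.arbitrary Ωp)⟩
    obtain ⟨C, hC⟩ : ∃ C, ∀ x, |f x| ≤ C := by
      refine ⟨|f (fun _ => Classical.arbitrary Ω)| + ∑ i, L i, fun x => ?_⟩
      have h1 := aux_diff_le f L hbd x (fun _ => Classical.arbitrary Ω)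
      have h2 := abs_sub_abs_le_abs_sub (f x) (f (fun _ => Classical.arbitrary Ω))
      linarith
    set c : ℝ := 4 * t / S with hc_def
    have hc : 0 ≤ c := div_nonneg (by linarith) hSpos.le
    have htensor := aux_tensor n (fun i => μ.map (X i)) (fun i => inferInstance) f hf L hbd c hc
    rw [← hν, ← hm] at htensor
    -- rewrite the event via the product measure
    have hsetmeas : MeasurableSet {x : Fin n → Ω | t ≤ f x - m} := by
      have : {x : Fin n → Ω | t ≤ f x - m} = (fun x => f x - m) ⁻¹' Set.Ici t := rfl
      rw [this]
      exact (hf.sub measurable_const) measurableSet_Ici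
    have hset : μ {ω | t ≤ f (fun i => X i ω) - ∫ ω', f (fun i => X i ω') ∂μ}
        = ν {x | t ≤ f x - m} := by
      rw [hEq, ← hmap, Measure.map_apply hT hsetmeas]
      rfl
    rw [hset]
    -- integrability
    have hexpmeas : Measurable fun x : Fin n → Ω => Real.exp (c * (f x - m)) :=
      ((hf.sub measurable_const).const_mul c).exp
    have hexpint : Integrable (fun x => Real.exp (c * (f x - m))) ν := by
      refine aux_int _ hexpmeas.aestronglyMeasurable (C := Real.exp (c * (C + |m|)))
        (fun x => ?_)
      rw [abs_of_pos (Real.exp_pos _)]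
      refine Real.exp_le_exp.2 (mul_le_mul_of_nonneg_left ?_ hc)
      have := abs_le.1 (hC x)
      have := le_abs_self m
      have := neg_abs_le m
      linarith [(abs_le.1 (hC x)).2]
    -- Markov
    have hmarkov := mul_meas_ge_le_integral_of_nonneg (μ := ν)
      (f := fun x => Real.exp (c * (f x - m)))
      (Filter.Eventually.of_forall fun x => (Real.exp_pos _).le) hexpint (Real.exp (c * t))
    have hsub : {x : Fin n → Ω | t ≤ f x - m}
        ⊆ {x | Real.exp (c * t) ≤ Real.exp (c * (f x - m))} := by
      intro x hx
      exact Real.exp_le_exp.2 (mul_le_mul_of_nonneg_left hx hc)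
    have hmono := measure_mono (μ := ν) hsub
    have h2 : Real.exp (c * t) * (ν {x | t ≤ f x - m}).toReal
        ≤ ∫ x, Real.exp (c * (f x - m)) ∂ν := by
      refine le_trans ?_ hmarkov
      exact mul_le_mul_of_nonneg_left
        (ENNReal.toReal_mono (measure_ne_top _ _) hmono) (Real.exp_pos _).le
    -- bound the mgf
    have h3 : ∫ x, Real.exp (c * (f x - m)) ∂ν ≤ Real.exp (c ^ 2 * S / 8) := by
      have hsplit : ∀ x : Fin n → Ω, Real.exp (c * (f x - m))
          = Real.exp (c * f x) / Real.exp (c * m) := by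
        intro x; rw [← Real.exp_sub]; congr 1; ring
      simp_rw [hsplit]
      rw [integral_div]
      rw [div_le_iff₀ (Real.exp_pos _)]
      calc ∫ x, Real.exp (c * f x) ∂ν ≤ Real.exp (c * m + c ^ 2 * S / 8) := htensor
        _ = Real.exp (c ^ 2 * S / 8) * Real.exp (c * m) := by
            rw [← Real.exp_add]; congr 1; ring
    have h4 : (ν {x | t ≤ f x - m}).toReal ≤ Real.exp (-2 * t ^ 2 / S) := by
      have h5 : Real.exp (c * t) * (ν {x | t ≤ f x - m}).toReal
          ≤ Real.exp (c ^ 2 * S / 8) := h2.trans h3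
      have h6 : (ν {x | t ≤ f x - m}).toReal ≤ Real.exp (c ^ 2 * S / 8) / Real.exp (c * t) := by
        rw [le_div_iff₀ (Real.exp_pos _)]
        calc (ν {x | t ≤ f x - m}).toReal * Real.exp (c * t)
            = Real.exp (c * t) * (ν {x | t ≤ f x - m}).toReal := by ring
          _ ≤ _ := h5
      refine h6.trans (le_of_eq ?_)
      rw [← Real.exp_sub]
      congr 1
      rw [hc_def]
      field_simp
      ring
    calc ν {x | t ≤ f x - m} = ENNReal.ofReal (ν {x | t ≤ f x - m}).toReal :=
        (ENNReal.ofReal_toReal (measure_ne_top _ _)).symm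
      _ ≤ ENNReal.ofReal (Real.exp (-2 * t ^ 2 / S)) := ENNReal.ofReal_le_ofReal h4
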